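/- For a signature σ on the complete graph K₅, χ'(K₅,σ) = 4 if and only if the edge set of K₅ can be partitioned into two Hamiltonian cycles each of which is positive in (K₅,σ); otherwise χ'(K₅,σ) = 5. -/

import Mathlib

open scoped Classical

/-- The color set `M_q`: for `q = 2r`, `{±1, …, ±r}`; for `q = 2r+1`, `{0, ±1, …, ±r}`. -/
def colorSet (q : ℕ) : Set ℤ :=
  {c : ℤ | c.natAbs ≤ q / 2 ∧ (Even q → c ≠ 0)}

/-- A proper `q`-edge coloring of the signed graph `(G, σ)`, given as an assignment
`γ v w` of a color to the incidence `(v, vw)`. -/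
def IsProperSignedEdgeColoring {V : Type*} (G : SimpleGraph V)
    (σ : Sym2 V → ℤˣ) (q : ℕ) (γ : V → V → ℤ) : Prop :=
  (∀ ⦃v w : V⦄, G.Adj v w → γ v w ∈ colorSet q) ∧
  (∀ ⦃v w : V⦄, G.Adj v w → γ v w = (-(σ s(v, w) : ℤ)) * γ w v) ∧
  (∀ ⦃v w₁ w₂ : V⦄, G.Adj v w₁ → G.Adj v w₂ → w₁ ≠ w₂ → γ v w₁ ≠ γ v w₂)

/-- The chromatic index of a signed graph: the least `q` admitting a proper
`q`-edge coloring. -/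
noncomputable def signedChromaticIndex {V : Type*} (G : SimpleGraph V)
    (σ : Sym2 V → ℤˣ) : ℕ :=
  sInf {q : ℕ | ∃ γ : V → V → ℤ, IsProperSignedEdgeColoring G σ q γ}

lemma usq (u : ℤˣ) : (u:ℤ) * u = 1 := by rcases Int.units_eq_one_or u with h|h <;> simp [h]
lemma unat (u : ℤˣ) : (u:ℤ).natAbs = 1 := Int.natAbs_of_isUnit u.isUnit

lemma mem4_1 {c : ℤ} (h : c.natAbs = 1) : c ∈ colorSet 4 := by
  refine ⟨by omega, fun _ => by omega⟩
lemma mem4_2 {c : ℤ} (h : c.natAbs = 2) : c ∈ colorSet 4 := by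
  refine ⟨by omega, fun _ => by omega⟩
lemma mem5_1 {c : ℤ} (h : c.natAbs = 1) : c ∈ colorSet 5 := by
  refine ⟨by omega, fun h => absurd h (by decide)⟩
lemma mem5_2 {c : ℤ} (h : c.natAbs = 2) : c ∈ colorSet 5 := by
  refine ⟨by omega, fun h => absurd h (by decide)⟩
lemma memq0 : (0:ℤ) ∈ colorSet 5 :=
  ⟨by simp, fun h => absurd h (by decide)⟩

lemma fin5cases (v : Fin 5) : v = 0 ∨ v = 1 ∨ v = 2 ∨ v = 3 ∨ v = 4 := by revert v; decide



def tblK4 (σ : Sym2 (Fin 5) → ℤˣ) : Fin 5 → Fin 5 → ℤ := fun v w =>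
  match v.val, w.val with
  | 0, 1 => 1
  | 1, 0 => -((σ s(0,1) : ℤ))
  | 1, 2 => (σ s(0,1) : ℤ)
  | 2, 1 => -((σ s(0,1) : ℤ) * (σ s(1,2) : ℤ))
  | 2, 3 => (σ s(0,1) : ℤ) * (σ s(1,2) : ℤ)
  | 3, 2 => -((σ s(0,1) : ℤ) * (σ s(1,2) : ℤ) * (σ s(2,3) : ℤ))
  | 3, 4 => (σ s(0,1) : ℤ) * (σ s(1,2) : ℤ) * (σ s(2,3) : ℤ)
  | 4, 3 => -((σ s(0,1) : ℤ) * (σ s(1,2) : ℤ) * (σ s(2,3) : ℤ) * (σ s(3,4) : ℤ))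
  | 4, 0 => (σ s(0,1) : ℤ) * (σ s(1,2) : ℤ) * (σ s(2,3) : ℤ) * (σ s(3,4) : ℤ)
  | 0, 4 => -((σ s(0,1) : ℤ) * (σ s(1,2) : ℤ) * (σ s(2,3) : ℤ) * (σ s(3,4) : ℤ) * (σ s(4,0) : ℤ))
  | 0, 2 => 2
  | 2, 0 => -(2 * ((σ s(0,2) : ℤ)))
  | 2, 4 => 2 * ((σ s(0,2) : ℤ))
  | 4, 2 => -(2 * ((σ s(0,2) : ℤ) * (σ s(2,4) : ℤ)))
  | 4, 1 => 2 * ((σ s(0,2) : ℤ) * (σ s(2,4) : ℤ))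
  | 1, 4 => -(2 * ((σ s(0,2) : ℤ) * (σ s(2,4) : ℤ) * (σ s(4,1) : ℤ)))
  | 1, 3 => 2 * ((σ s(0,2) : ℤ) * (σ s(2,4) : ℤ) * (σ s(4,1) : ℤ))
  | 3, 1 => -(2 * ((σ s(0,2) : ℤ) * (σ s(2,4) : ℤ) * (σ s(4,1) : ℤ) * (σ s(1,3) : ℤ)))
  | 3, 0 => 2 * ((σ s(0,2) : ℤ) * (σ s(2,4) : ℤ) * (σ s(4,1) : ℤ) * (σ s(1,3) : ℤ))
  | 0, 3 => -(2 * ((σ s(0,2) : ℤ) * (σ s(2,4) : ℤ) * (σ s(4,1) : ℤ) * (σ s(1,3) : ℤ) * (σ s(3,0) : ℤ)))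
  | _, _ => 0

lemma tblK4_e_0_0 (σ : Sym2 (Fin 5) → ℤˣ) : tblK4 σ 0 0 = 0 := rfl
lemma tblK4_e_0_1 (σ : Sym2 (Fin 5) → ℤˣ) : tblK4 σ 0 1 = 1 := rfl
lemma tblK4_e_0_2 (σ : Sym2 (Fin 5) → ℤˣ) : tblK4 σ 0 2 = 2 := rfl
lemma tblK4_e_0_3 (σ : Sym2 (Fin 5) → ℤˣ) : tblK4 σ 0 3 = -(2 * ((σ s(0,2) : ℤ) * (σ s(2,4) : ℤ) * (σ s(4,1) : ℤ) * (σ s(1,3) : ℤ) * (σ s(3,0) : ℤ))) := rfl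
lemma tblK4_e_0_4 (σ : Sym2 (Fin 5) → ℤˣ) : tblK4 σ 0 4 = -((σ s(0,1) : ℤ) * (σ s(1,2) : ℤ) * (σ s(2,3) : ℤ) * (σ s(3,4) : ℤ) * (σ s(4,0) : ℤ)) := rfl
lemma tblK4_e_1_0 (σ : Sym2 (Fin 5) → ℤˣ) : tblK4 σ 1 0 = -((σ s(0,1) : ℤ)) := rfl
lemma tblK4_e_1_1 (σ : Sym2 (Fin 5) → ℤˣ) : tblK4 σ 1 1 = 0 := rfl
lemma tblK4_e_1_2 (σ : Sym2 (Fin 5) → ℤˣ) : tblK4 σ 1 2 = (σ s(0,1) : ℤ) := rfl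
lemma tblK4_e_1_3 (σ : Sym2 (Fin 5) → ℤˣ) : tblK4 σ 1 3 = 2 * ((σ s(0,2) : ℤ) * (σ s(2,4) : ℤ) * (σ s(4,1) : ℤ)) := rfl
lemma tblK4_e_1_4 (σ : Sym2 (Fin 5) → ℤˣ) : tblK4 σ 1 4 = -(2 * ((σ s(0,2) : ℤ) * (σ s(2,4) : ℤ) * (σ s(4,1) : ℤ))) := rfl
lemma tblK4_e_2_0 (σ : Sym2 (Fin 5) → ℤˣ) : tblK4 σ 2 0 = -(2 * ((σ s(0,2) : ℤ))) := rfl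
lemma tblK4_e_2_1 (σ : Sym2 (Fin 5) → ℤˣ) : tblK4 σ 2 1 = -((σ s(0,1) : ℤ) * (σ s(1,2) : ℤ)) := rfl
lemma tblK4_e_2_2 (σ : Sym2 (Fin 5) → ℤˣ) : tblK4 σ 2 2 = 0 := rfl
lemma tblK4_e_2_3 (σ : Sym2 (Fin 5) → ℤˣ) : tblK4 σ 2 3 = (σ s(0,1) : ℤ) * (σ s(1,2) : ℤ) := rfl
lemma tblK4_e_2_4 (σ : Sym2 (Fin 5) → ℤˣ) : tblK4 σ 2 4 = 2 * ((σ s(0,2) : ℤ)) := rfl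
lemma tblK4_e_3_0 (σ : Sym2 (Fin 5) → ℤˣ) : tblK4 σ 3 0 = 2 * ((σ s(0,2) : ℤ) * (σ s(2,4) : ℤ) * (σ s(4,1) : ℤ) * (σ s(1,3) : ℤ)) := rfl
lemma tblK4_e_3_1 (σ : Sym2 (Fin 5) → ℤˣ) : tblK4 σ 3 1 = -(2 * ((σ s(0,2) : ℤ) * (σ s(2,4) : ℤ) * (σ s(4,1) : ℤ) * (σ s(1,3) : ℤ))) := rfl
lemma tblK4_e_3_2 (σ : Sym2 (Fin 5) → ℤˣ) : tblK4 σ 3 2 = -((σ s(0,1) : ℤ) * (σ s(1,2) : ℤ) * (σ s(2,3) : ℤ)) := rfl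
lemma tblK4_e_3_3 (σ : Sym2 (Fin 5) → ℤˣ) : tblK4 σ 3 3 = 0 := rfl
lemma tblK4_e_3_4 (σ : Sym2 (Fin 5) → ℤˣ) : tblK4 σ 3 4 = (σ s(0,1) : ℤ) * (σ s(1,2) : ℤ) * (σ s(2,3) : ℤ) := rfl
lemma tblK4_e_4_0 (σ : Sym2 (Fin 5) → ℤˣ) : tblK4 σ 4 0 = (σ s(0,1) : ℤ) * (σ s(1,2) : ℤ) * (σ s(2,3) : ℤ) * (σ s(3,4) : ℤ) := rfl
lemma tblK4_e_4_1 (σ : Sym2 (Fin 5) → ℤˣ) : tblK4 σ 4 1 = 2 * ((σ s(0,2) : ℤ) * (σ s(2,4) : ℤ)) := rfl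
lemma tblK4_e_4_2 (σ : Sym2 (Fin 5) → ℤˣ) : tblK4 σ 4 2 = -(2 * ((σ s(0,2) : ℤ) * (σ s(2,4) : ℤ))) := rfl
lemma tblK4_e_4_3 (σ : Sym2 (Fin 5) → ℤˣ) : tblK4 σ 4 3 = -((σ s(0,1) : ℤ) * (σ s(1,2) : ℤ) * (σ s(2,3) : ℤ) * (σ s(3,4) : ℤ)) := rfl
lemma tblK4_e_4_4 (σ : Sym2 (Fin 5) → ℤˣ) : tblK4 σ 4 4 = 0 := rfl

def tblK5 (σ : Sym2 (Fin 5) → ℤˣ) : Fin 5 → Fin 5 → ℤ := fun v w =>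
  match v.val, w.val with
  | 0, 1 => 1
  | 1, 0 => -((σ s(0,1) : ℤ))
  | 1, 2 => (σ s(0,1) : ℤ)
  | 2, 1 => -((σ s(0,1) : ℤ) * (σ s(1,2) : ℤ))
  | 2, 3 => (σ s(0,1) : ℤ) * (σ s(1,2) : ℤ)
  | 3, 2 => -((σ s(0,1) : ℤ) * (σ s(1,2) : ℤ) * (σ s(2,3) : ℤ))
  | 3, 4 => (σ s(0,1) : ℤ) * (σ s(1,2) : ℤ) * (σ s(2,3) : ℤ)
  | 4, 3 => -((σ s(0,1) : ℤ) * (σ s(1,2) : ℤ) * (σ s(2,3) : ℤ) * (σ s(3,4) : ℤ))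
  | 3, 0 => 2
  | 0, 3 => -(2 * ((σ s(3,0) : ℤ)))
  | 0, 2 => 2 * ((σ s(3,0) : ℤ))
  | 2, 0 => -(2 * ((σ s(3,0) : ℤ) * (σ s(0,2) : ℤ)))
  | 2, 4 => 2 * ((σ s(3,0) : ℤ) * (σ s(0,2) : ℤ))
  | 4, 2 => -(2 * ((σ s(3,0) : ℤ) * (σ s(0,2) : ℤ) * (σ s(2,4) : ℤ)))
  | 4, 1 => 2 * ((σ s(3,0) : ℤ) * (σ s(0,2) : ℤ) * (σ s(2,4) : ℤ))
  | 1, 4 => -(2 * ((σ s(3,0) : ℤ) * (σ s(0,2) : ℤ) * (σ s(2,4) : ℤ) * (σ s(4,1) : ℤ)))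
  | _, _ => 0

lemma tblK5_e_0_0 (σ : Sym2 (Fin 5) → ℤˣ) : tblK5 σ 0 0 = 0 := rfl
lemma tblK5_e_0_1 (σ : Sym2 (Fin 5) → ℤˣ) : tblK5 σ 0 1 = 1 := rfl
lemma tblK5_e_0_2 (σ : Sym2 (Fin 5) → ℤˣ) : tblK5 σ 0 2 = 2 * ((σ s(3,0) : ℤ)) := rfl
lemma tblK5_e_0_3 (σ : Sym2 (Fin 5) → ℤˣ) : tblK5 σ 0 3 = -(2 * ((σ s(3,0) : ℤ))) := rfl
lemma tblK5_e_0_4 (σ : Sym2 (Fin 5) → ℤˣ) : tblK5 σ 0 4 = 0 := rfl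
lemma tblK5_e_1_0 (σ : Sym2 (Fin 5) → ℤˣ) : tblK5 σ 1 0 = -((σ s(0,1) : ℤ)) := rfl
lemma tblK5_e_1_1 (σ : Sym2 (Fin 5) → ℤˣ) : tblK5 σ 1 1 = 0 := rfl
lemma tblK5_e_1_2 (σ : Sym2 (Fin 5) → ℤˣ) : tblK5 σ 1 2 = (σ s(0,1) : ℤ) := rfl
lemma tblK5_e_1_3 (σ : Sym2 (Fin 5) → ℤˣ) : tblK5 σ 1 3 = 0 := rfl
lemma tblK5_e_1_4 (σ : Sym2 (Fin 5) → ℤˣ) : tblK5 σ 1 4 = -(2 * ((σ s(3,0) : ℤ) * (σ s(0,2) : ℤ) * (σ s(2,4) : ℤ) * (σ s(4,1) : ℤ))) := rfl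
lemma tblK5_e_2_0 (σ : Sym2 (Fin 5) → ℤˣ) : tblK5 σ 2 0 = -(2 * ((σ s(3,0) : ℤ) * (σ s(0,2) : ℤ))) := rfl
lemma tblK5_e_2_1 (σ : Sym2 (Fin 5) → ℤˣ) : tblK5 σ 2 1 = -((σ s(0,1) : ℤ) * (σ s(1,2) : ℤ)) := rfl
lemma tblK5_e_2_2 (σ : Sym2 (Fin 5) → ℤˣ) : tblK5 σ 2 2 = 0 := rfl
lemma tblK5_e_2_3 (σ : Sym2 (Fin 5) → ℤˣ) : tblK5 σ 2 3 = (σ s(0,1) : ℤ) * (σ s(1,2) : ℤ) := rfl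
lemma tblK5_e_2_4 (σ : Sym2 (Fin 5) → ℤˣ) : tblK5 σ 2 4 = 2 * ((σ s(3,0) : ℤ) * (σ s(0,2) : ℤ)) := rfl
lemma tblK5_e_3_0 (σ : Sym2 (Fin 5) → ℤˣ) : tblK5 σ 3 0 = 2 := rfl
lemma tblK5_e_3_1 (σ : Sym2 (Fin 5) → ℤˣ) : tblK5 σ 3 1 = 0 := rfl
lemma tblK5_e_3_2 (σ : Sym2 (Fin 5) → ℤˣ) : tblK5 σ 3 2 = -((σ s(0,1) : ℤ) * (σ s(1,2) : ℤ) * (σ s(2,3) : ℤ)) := rfl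
lemma tblK5_e_3_3 (σ : Sym2 (Fin 5) → ℤˣ) : tblK5 σ 3 3 = 0 := rfl
lemma tblK5_e_3_4 (σ : Sym2 (Fin 5) → ℤˣ) : tblK5 σ 3 4 = (σ s(0,1) : ℤ) * (σ s(1,2) : ℤ) * (σ s(2,3) : ℤ) := rfl
lemma tblK5_e_4_0 (σ : Sym2 (Fin 5) → ℤˣ) : tblK5 σ 4 0 = 0 := rfl
lemma tblK5_e_4_1 (σ : Sym2 (Fin 5) → ℤˣ) : tblK5 σ 4 1 = 2 * ((σ s(3,0) : ℤ) * (σ s(0,2) : ℤ) * (σ s(2,4) : ℤ)) := rfl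
lemma tblK5_e_4_2 (σ : Sym2 (Fin 5) → ℤˣ) : tblK5 σ 4 2 = -(2 * ((σ s(3,0) : ℤ) * (σ s(0,2) : ℤ) * (σ s(2,4) : ℤ))) := rfl
lemma tblK5_e_4_3 (σ : Sym2 (Fin 5) → ℤˣ) : tblK5 σ 4 3 = -((σ s(0,1) : ℤ) * (σ s(1,2) : ℤ) * (σ s(2,3) : ℤ) * (σ s(3,4) : ℤ)) := rfl
lemma tblK5_e_4_4 (σ : Sym2 (Fin 5) → ℤˣ) : tblK5 σ 4 4 = 0 := rfl

set_option maxHeartbeats 4000000 in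
lemma key4a (σ : Sym2 (Fin 5) → ℤˣ) :
    ∀ ⦃v w : Fin 5⦄, (⊤ : SimpleGraph (Fin 5)).Adj v w → tblK4 σ v w ∈ colorSet 4 := by
  intro v w h
  rcases fin5cases v with rfl|rfl|rfl|rfl|rfl <;> rcases fin5cases w with rfl|rfl|rfl|rfl|rfl
  · simp at h
  · rw [tblK4_e_0_1]; exact mem4_1 (by simp [Int.natAbs_mul, Int.natAbs_neg, unat])
  · rw [tblK4_e_0_2]; exact mem4_2 (by simp [Int.natAbs_mul, Int.natAbs_neg, unat])
  · rw [tblK4_e_0_3]; exact mem4_2 (by simp [Int.natAbs_mul, Int.natAbs_neg, unat])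
  · rw [tblK4_e_0_4]; exact mem4_1 (by simp [Int.natAbs_mul, Int.natAbs_neg, unat])
  · rw [tblK4_e_1_0]; exact mem4_1 (by simp [Int.natAbs_mul, Int.natAbs_neg, unat])
  · simp at h
  · rw [tblK4_e_1_2]; exact mem4_1 (by simp [Int.natAbs_mul, Int.natAbs_neg, unat])
  · rw [tblK4_e_1_3]; exact mem4_2 (by simp [Int.natAbs_mul, Int.natAbs_neg, unat])
  · rw [tblK4_e_1_4]; exact mem4_2 (by simp [Int.natAbs_mul, Int.natAbs_neg, unat])
  · rw [tblK4_e_2_0]; exact mem4_2 (by simp [Int.natAbs_mul, Int.natAbs_neg, unat])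
  · rw [tblK4_e_2_1]; exact mem4_1 (by simp [Int.natAbs_mul, Int.natAbs_neg, unat])
  · simp at h
  · rw [tblK4_e_2_3]; exact mem4_1 (by simp [Int.natAbs_mul, Int.natAbs_neg, unat])
  · rw [tblK4_e_2_4]; exact mem4_2 (by simp [Int.natAbs_mul, Int.natAbs_neg, unat])
  · rw [tblK4_e_3_0]; exact mem4_2 (by simp [Int.natAbs_mul, Int.natAbs_neg, unat])
  · rw [tblK4_e_3_1]; exact mem4_2 (by simp [Int.natAbs_mul, Int.natAbs_neg, unat])
  · rw [tblK4_e_3_2]; exact mem4_1 (by simp [Int.natAbs_mul, Int.natAbs_neg, unat])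
  · simp at h
  · rw [tblK4_e_3_4]; exact mem4_1 (by simp [Int.natAbs_mul, Int.natAbs_neg, unat])
  · rw [tblK4_e_4_0]; exact mem4_1 (by simp [Int.natAbs_mul, Int.natAbs_neg, unat])
  · rw [tblK4_e_4_1]; exact mem4_2 (by simp [Int.natAbs_mul, Int.natAbs_neg, unat])
  · rw [tblK4_e_4_2]; exact mem4_2 (by simp [Int.natAbs_mul, Int.natAbs_neg, unat])
  · rw [tblK4_e_4_3]; exact mem4_1 (by simp [Int.natAbs_mul, Int.natAbs_neg, unat])
  · simp at h

set_option maxHeartbeats 4000000 in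
lemma key4b (σ : Sym2 (Fin 5) → ℤˣ) :
    ∀ ⦃v w : Fin 5⦄, (⊤ : SimpleGraph (Fin 5)).Adj v w → tblK4 σ v w = (-(σ s(v, w) : ℤ)) * tblK4 σ w v := by
  intro v w h
  rcases fin5cases v with rfl|rfl|rfl|rfl|rfl <;> rcases fin5cases w with rfl|rfl|rfl|rfl|rfl
  · simp at h
  · rw [tblK4_e_0_1, tblK4_e_1_0]; linear_combination (-(1)) * usq (σ s((0:Fin 5),(1:Fin 5)))
  · rw [tblK4_e_0_2, tblK4_e_2_0]; linear_combination (-(2)) * usq (σ s((0:Fin 5),(2:Fin 5)))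
  · rw [tblK4_e_0_3, tblK4_e_3_0]; rw [show s((0:Fin 5),(3:Fin 5)) = s((3:Fin 5),(0:Fin 5)) from Sym2.eq_swap]; ring
  · rw [tblK4_e_0_4, tblK4_e_4_0]; rw [show s((0:Fin 5),(4:Fin 5)) = s((4:Fin 5),(0:Fin 5)) from Sym2.eq_swap]; ring
  · rw [tblK4_e_1_0, tblK4_e_0_1]; rw [show s((1:Fin 5),(0:Fin 5)) = s((0:Fin 5),(1:Fin 5)) from Sym2.eq_swap]; ring
  · simp at h
  · rw [tblK4_e_1_2, tblK4_e_2_1]; linear_combination (-((σ s(0,1) : ℤ))) * usq (σ s((1:Fin 5),(2:Fin 5)))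
  · rw [tblK4_e_1_3, tblK4_e_3_1]; linear_combination (-(2 * ((σ s(0,2) : ℤ) * (σ s(2,4) : ℤ) * (σ s(4,1) : ℤ)))) * usq (σ s((1:Fin 5),(3:Fin 5)))
  · rw [tblK4_e_1_4, tblK4_e_4_1]; rw [show s((1:Fin 5),(4:Fin 5)) = s((4:Fin 5),(1:Fin 5)) from Sym2.eq_swap]; ring
  · rw [tblK4_e_2_0, tblK4_e_0_2]; rw [show s((2:Fin 5),(0:Fin 5)) = s((0:Fin 5),(2:Fin 5)) from Sym2.eq_swap]; ring
  · rw [tblK4_e_2_1, tblK4_e_1_2]; rw [show s((2:Fin 5),(1:Fin 5)) = s((1:Fin 5),(2:Fin 5)) from Sym2.eq_swap]; ring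
  · simp at h
  · rw [tblK4_e_2_3, tblK4_e_3_2]; linear_combination (-((σ s(0,1) : ℤ) * (σ s(1,2) : ℤ))) * usq (σ s((2:Fin 5),(3:Fin 5)))
  · rw [tblK4_e_2_4, tblK4_e_4_2]; linear_combination (-(2 * ((σ s(0,2) : ℤ)))) * usq (σ s((2:Fin 5),(4:Fin 5)))
  · rw [tblK4_e_3_0, tblK4_e_0_3]; linear_combination (-(2 * ((σ s(0,2) : ℤ) * (σ s(2,4) : ℤ) * (σ s(4,1) : ℤ) * (σ s(1,3) : ℤ)))) * usq (σ s((3:Fin 5),(0:Fin 5)))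
  · rw [tblK4_e_3_1, tblK4_e_1_3]; rw [show s((3:Fin 5),(1:Fin 5)) = s((1:Fin 5),(3:Fin 5)) from Sym2.eq_swap]; ring
  · rw [tblK4_e_3_2, tblK4_e_2_3]; rw [show s((3:Fin 5),(2:Fin 5)) = s((2:Fin 5),(3:Fin 5)) from Sym2.eq_swap]; ring
  · simp at h
  · rw [tblK4_e_3_4, tblK4_e_4_3]; linear_combination (-((σ s(0,1) : ℤ) * (σ s(1,2) : ℤ) * (σ s(2,3) : ℤ))) * usq (σ s((3:Fin 5),(4:Fin 5)))
  · rw [tblK4_e_4_0, tblK4_e_0_4]; linear_combination (-((σ s(0,1) : ℤ) * (σ s(1,2) : ℤ) * (σ s(2,3) : ℤ) * (σ s(3,4) : ℤ))) * usq (σ s((4:Fin 5),(0:Fin 5)))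
  · rw [tblK4_e_4_1, tblK4_e_1_4]; linear_combination (-(2 * ((σ s(0,2) : ℤ) * (σ s(2,4) : ℤ)))) * usq (σ s((4:Fin 5),(1:Fin 5)))
  · rw [tblK4_e_4_2, tblK4_e_2_4]; rw [show s((4:Fin 5),(2:Fin 5)) = s((2:Fin 5),(4:Fin 5)) from Sym2.eq_swap]; ring
  · rw [tblK4_e_4_3, tblK4_e_3_4]; rw [show s((4:Fin 5),(3:Fin 5)) = s((3:Fin 5),(4:Fin 5)) from Sym2.eq_swap]; ring
  · simp at h

set_option maxHeartbeats 4000000 in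
lemma key4c (σ : Sym2 (Fin 5) → ℤˣ)
    (h1 : (σ s(0,1) : ℤ) * (σ s(1,2) : ℤ) * (σ s(2,3) : ℤ) * (σ s(3,4) : ℤ) * (σ s(4,0) : ℤ) = 1)
    (h2 : (σ s(0,2) : ℤ) * (σ s(2,4) : ℤ) * (σ s(4,1) : ℤ) * (σ s(1,3) : ℤ) * (σ s(3,0) : ℤ) = 1) :
    ∀ ⦃v w₁ w₂ : Fin 5⦄, (⊤ : SimpleGraph (Fin 5)).Adj v w₁ → (⊤ : SimpleGraph (Fin 5)).Adj v w₂ → w₁ ≠ w₂ → tblK4 σ v w₁ ≠ tblK4 σ v w₂ := by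
  have nn1 : ((σ s(0,1) : ℤ)).natAbs = 1 := unat _
  have nn2 : ((σ s(0,1) : ℤ) * (σ s(1,2) : ℤ)).natAbs = 1 := by simp [Int.natAbs_mul, unat]
  have nn3 : ((σ s(0,1) : ℤ) * (σ s(1,2) : ℤ) * (σ s(2,3) : ℤ)).natAbs = 1 := by simp [Int.natAbs_mul, unat]
  have nn4 : ((σ s(0,1) : ℤ) * (σ s(1,2) : ℤ) * (σ s(2,3) : ℤ) * (σ s(3,4) : ℤ)).natAbs = 1 := by simp [Int.natAbs_mul, unat]
  have nn5 : ((σ s(0,2) : ℤ)).natAbs = 1 := unat _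
  have nn6 : ((σ s(0,2) : ℤ) * (σ s(2,4) : ℤ)).natAbs = 1 := by simp [Int.natAbs_mul, unat]
  have nn7 : ((σ s(0,2) : ℤ) * (σ s(2,4) : ℤ) * (σ s(4,1) : ℤ)).natAbs = 1 := by simp [Int.natAbs_mul, unat]
  have nn8 : ((σ s(0,2) : ℤ) * (σ s(2,4) : ℤ) * (σ s(4,1) : ℤ) * (σ s(1,3) : ℤ)).natAbs = 1 := by simp [Int.natAbs_mul, unat]
  intro v w₁ w₂ ha hb hne
  rcases fin5cases v with rfl|rfl|rfl|rfl|rfl <;> rcases fin5cases w₁ with rfl|rfl|rfl|rfl|rfl <;> rcases fin5cases w₂ with rfl|rfl|rfl|rfl|rfl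
  · simp at ha
  · simp at ha
  · simp at ha
  · simp at ha
  · simp at ha
  · simp at hb
  · simp at hne
  · rw [tblK4_e_0_1, tblK4_e_0_2]; omega
  · rw [tblK4_e_0_1, tblK4_e_0_3]; omega
  · rw [tblK4_e_0_1, tblK4_e_0_4]; omega
  · simp at hb
  · rw [tblK4_e_0_2, tblK4_e_0_1]; omega
  · simp at hne
  · rw [tblK4_e_0_2, tblK4_e_0_3]; omega
  · rw [tblK4_e_0_2, tblK4_e_0_4]; omega
  · simp at hb
  · rw [tblK4_e_0_3, tblK4_e_0_1]; omega
  · rw [tblK4_e_0_3, tblK4_e_0_2]; omega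
  · simp at hne
  · rw [tblK4_e_0_3, tblK4_e_0_4]; omega
  · simp at hb
  · rw [tblK4_e_0_4, tblK4_e_0_1]; omega
  · rw [tblK4_e_0_4, tblK4_e_0_2]; omega
  · rw [tblK4_e_0_4, tblK4_e_0_3]; omega
  · simp at hne
  · simp at hne
  · simp at hb
  · rw [tblK4_e_1_0, tblK4_e_1_2]; omega
  · rw [tblK4_e_1_0, tblK4_e_1_3]; omega
  · rw [tblK4_e_1_0, tblK4_e_1_4]; omega
  · simp at ha
  · simp at ha
  · simp at ha
  · simp at ha
  · simp at ha
  · rw [tblK4_e_1_2, tblK4_e_1_0]; omega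
  · simp at hb
  · simp at hne
  · rw [tblK4_e_1_2, tblK4_e_1_3]; omega
  · rw [tblK4_e_1_2, tblK4_e_1_4]; omega
  · rw [tblK4_e_1_3, tblK4_e_1_0]; omega
  · simp at hb
  · rw [tblK4_e_1_3, tblK4_e_1_2]; omega
  · simp at hne
  · rw [tblK4_e_1_3, tblK4_e_1_4]; omega
  · rw [tblK4_e_1_4, tblK4_e_1_0]; omega
  · simp at hb
  · rw [tblK4_e_1_4, tblK4_e_1_2]; omega
  · rw [tblK4_e_1_4, tblK4_e_1_3]; omega
  · simp at hne
  · simp at hne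
  · rw [tblK4_e_2_0, tblK4_e_2_1]; omega
  · simp at hb
  · rw [tblK4_e_2_0, tblK4_e_2_3]; omega
  · rw [tblK4_e_2_0, tblK4_e_2_4]; omega
  · rw [tblK4_e_2_1, tblK4_e_2_0]; omega
  · simp at hne
  · simp at hb
  · rw [tblK4_e_2_1, tblK4_e_2_3]; omega
  · rw [tblK4_e_2_1, tblK4_e_2_4]; omega
  · simp at ha
  · simp at ha
  · simp at ha
  · simp at ha
  · simp at ha
  · rw [tblK4_e_2_3, tblK4_e_2_0]; omega
  · rw [tblK4_e_2_3, tblK4_e_2_1]; omega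
  · simp at hb
  · simp at hne
  · rw [tblK4_e_2_3, tblK4_e_2_4]; omega
  · rw [tblK4_e_2_4, tblK4_e_2_0]; omega
  · rw [tblK4_e_2_4, tblK4_e_2_1]; omega
  · simp at hb
  · rw [tblK4_e_2_4, tblK4_e_2_3]; omega
  · simp at hne
  · simp at hne
  · rw [tblK4_e_3_0, tblK4_e_3_1]; omega
  · rw [tblK4_e_3_0, tblK4_e_3_2]; omega
  · simp at hb
  · rw [tblK4_e_3_0, tblK4_e_3_4]; omega
  · rw [tblK4_e_3_1, tblK4_e_3_0]; omega
  · simp at hne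
  · rw [tblK4_e_3_1, tblK4_e_3_2]; omega
  · simp at hb
  · rw [tblK4_e_3_1, tblK4_e_3_4]; omega
  · rw [tblK4_e_3_2, tblK4_e_3_0]; omega
  · rw [tblK4_e_3_2, tblK4_e_3_1]; omega
  · simp at hne
  · simp at hb
  · rw [tblK4_e_3_2, tblK4_e_3_4]; omega
  · simp at ha
  · simp at ha
  · simp at ha
  · simp at ha
  · simp at ha
  · rw [tblK4_e_3_4, tblK4_e_3_0]; omega
  · rw [tblK4_e_3_4, tblK4_e_3_1]; omega
  · rw [tblK4_e_3_4, tblK4_e_3_2]; omega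
  · simp at hb
  · simp at hne
  · simp at hne
  · rw [tblK4_e_4_0, tblK4_e_4_1]; omega
  · rw [tblK4_e_4_0, tblK4_e_4_2]; omega
  · rw [tblK4_e_4_0, tblK4_e_4_3]; omega
  · simp at hb
  · rw [tblK4_e_4_1, tblK4_e_4_0]; omega
  · simp at hne
  · rw [tblK4_e_4_1, tblK4_e_4_2]; omega
  · rw [tblK4_e_4_1, tblK4_e_4_3]; omega
  · simp at hb
  · rw [tblK4_e_4_2, tblK4_e_4_0]; omega
  · rw [tblK4_e_4_2, tblK4_e_4_1]; omega
  · simp at hne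
  · rw [tblK4_e_4_2, tblK4_e_4_3]; omega
  · simp at hb
  · rw [tblK4_e_4_3, tblK4_e_4_0]; omega
  · rw [tblK4_e_4_3, tblK4_e_4_1]; omega
  · rw [tblK4_e_4_3, tblK4_e_4_2]; omega
  · simp at hne
  · simp at hb
  · simp at ha
  · simp at ha
  · simp at ha
  · simp at ha
  · simp at ha

lemma key4 (σ : Sym2 (Fin 5) → ℤˣ)
    (h1 : (σ s(0,1) : ℤ) * (σ s(1,2) : ℤ) * (σ s(2,3) : ℤ) * (σ s(3,4) : ℤ) * (σ s(4,0) : ℤ) = 1)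
    (h2 : (σ s(0,2) : ℤ) * (σ s(2,4) : ℤ) * (σ s(4,1) : ℤ) * (σ s(1,3) : ℤ) * (σ s(3,0) : ℤ) = 1) :
    IsProperSignedEdgeColoring (⊤ : SimpleGraph (Fin 5)) σ 4 (tblK4 σ) :=
  ⟨key4a σ, key4b σ, key4c σ h1 h2⟩

set_option maxHeartbeats 4000000 in
lemma key5a (σ : Sym2 (Fin 5) → ℤˣ) :
    ∀ ⦃v w : Fin 5⦄, (⊤ : SimpleGraph (Fin 5)).Adj v w → tblK5 σ v w ∈ colorSet 5 := by
  intro v w h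
  rcases fin5cases v with rfl|rfl|rfl|rfl|rfl <;> rcases fin5cases w with rfl|rfl|rfl|rfl|rfl
  · simp at h
  · rw [tblK5_e_0_1]; exact mem5_1 (by simp [Int.natAbs_mul, Int.natAbs_neg, unat])
  · rw [tblK5_e_0_2]; exact mem5_2 (by simp [Int.natAbs_mul, Int.natAbs_neg, unat])
  · rw [tblK5_e_0_3]; exact mem5_2 (by simp [Int.natAbs_mul, Int.natAbs_neg, unat])
  · rw [tblK5_e_0_4]; exact memq0
  · rw [tblK5_e_1_0]; exact mem5_1 (by simp [Int.natAbs_mul, Int.natAbs_neg, unat])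
  · simp at h
  · rw [tblK5_e_1_2]; exact mem5_1 (by simp [Int.natAbs_mul, Int.natAbs_neg, unat])
  · rw [tblK5_e_1_3]; exact memq0
  · rw [tblK5_e_1_4]; exact mem5_2 (by simp [Int.natAbs_mul, Int.natAbs_neg, unat])
  · rw [tblK5_e_2_0]; exact mem5_2 (by simp [Int.natAbs_mul, Int.natAbs_neg, unat])
  · rw [tblK5_e_2_1]; exact mem5_1 (by simp [Int.natAbs_mul, Int.natAbs_neg, unat])
  · simp at h
  · rw [tblK5_e_2_3]; exact mem5_1 (by simp [Int.natAbs_mul, Int.natAbs_neg, unat])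
  · rw [tblK5_e_2_4]; exact mem5_2 (by simp [Int.natAbs_mul, Int.natAbs_neg, unat])
  · rw [tblK5_e_3_0]; exact mem5_2 (by simp [Int.natAbs_mul, Int.natAbs_neg, unat])
  · rw [tblK5_e_3_1]; exact memq0
  · rw [tblK5_e_3_2]; exact mem5_1 (by simp [Int.natAbs_mul, Int.natAbs_neg, unat])
  · simp at h
  · rw [tblK5_e_3_4]; exact mem5_1 (by simp [Int.natAbs_mul, Int.natAbs_neg, unat])
  · rw [tblK5_e_4_0]; exact memq0
  · rw [tblK5_e_4_1]; exact mem5_2 (by simp [Int.natAbs_mul, Int.natAbs_neg, unat])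
  · rw [tblK5_e_4_2]; exact mem5_2 (by simp [Int.natAbs_mul, Int.natAbs_neg, unat])
  · rw [tblK5_e_4_3]; exact mem5_1 (by simp [Int.natAbs_mul, Int.natAbs_neg, unat])
  · simp at h

set_option maxHeartbeats 4000000 in
lemma key5b (σ : Sym2 (Fin 5) → ℤˣ) :
    ∀ ⦃v w : Fin 5⦄, (⊤ : SimpleGraph (Fin 5)).Adj v w → tblK5 σ v w = (-(σ s(v, w) : ℤ)) * tblK5 σ w v := by
  intro v w h
  rcases fin5cases v with rfl|rfl|rfl|rfl|rfl <;> rcases fin5cases w with rfl|rfl|rfl|rfl|rfl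
  · simp at h
  · rw [tblK5_e_0_1, tblK5_e_1_0]; linear_combination (-(1)) * usq (σ s((0:Fin 5),(1:Fin 5)))
  · rw [tblK5_e_0_2, tblK5_e_2_0]; linear_combination (-(2 * ((σ s(3,0) : ℤ)))) * usq (σ s((0:Fin 5),(2:Fin 5)))
  · rw [tblK5_e_0_3, tblK5_e_3_0]; rw [show s((0:Fin 5),(3:Fin 5)) = s((3:Fin 5),(0:Fin 5)) from Sym2.eq_swap]; ring
  · rw [tblK5_e_0_4, tblK5_e_4_0]; ring
  · rw [tblK5_e_1_0, tblK5_e_0_1]; rw [show s((1:Fin 5),(0:Fin 5)) = s((0:Fin 5),(1:Fin 5)) from Sym2.eq_swap]; ring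
  · simp at h
  · rw [tblK5_e_1_2, tblK5_e_2_1]; linear_combination (-((σ s(0,1) : ℤ))) * usq (σ s((1:Fin 5),(2:Fin 5)))
  · rw [tblK5_e_1_3, tblK5_e_3_1]; ring
  · rw [tblK5_e_1_4, tblK5_e_4_1]; rw [show s((1:Fin 5),(4:Fin 5)) = s((4:Fin 5),(1:Fin 5)) from Sym2.eq_swap]; ring
  · rw [tblK5_e_2_0, tblK5_e_0_2]; rw [show s((2:Fin 5),(0:Fin 5)) = s((0:Fin 5),(2:Fin 5)) from Sym2.eq_swap]; ring
  · rw [tblK5_e_2_1, tblK5_e_1_2]; rw [show s((2:Fin 5),(1:Fin 5)) = s((1:Fin 5),(2:Fin 5)) from Sym2.eq_swap]; ring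
  · simp at h
  · rw [tblK5_e_2_3, tblK5_e_3_2]; linear_combination (-((σ s(0,1) : ℤ) * (σ s(1,2) : ℤ))) * usq (σ s((2:Fin 5),(3:Fin 5)))
  · rw [tblK5_e_2_4, tblK5_e_4_2]; linear_combination (-(2 * ((σ s(3,0) : ℤ) * (σ s(0,2) : ℤ)))) * usq (σ s((2:Fin 5),(4:Fin 5)))
  · rw [tblK5_e_3_0, tblK5_e_0_3]; linear_combination (-(2)) * usq (σ s((3:Fin 5),(0:Fin 5)))
  · rw [tblK5_e_3_1, tblK5_e_1_3]; ring
  · rw [tblK5_e_3_2, tblK5_e_2_3]; rw [show s((3:Fin 5),(2:Fin 5)) = s((2:Fin 5),(3:Fin 5)) from Sym2.eq_swap]; ring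
  · simp at h
  · rw [tblK5_e_3_4, tblK5_e_4_3]; linear_combination (-((σ s(0,1) : ℤ) * (σ s(1,2) : ℤ) * (σ s(2,3) : ℤ))) * usq (σ s((3:Fin 5),(4:Fin 5)))
  · rw [tblK5_e_4_0, tblK5_e_0_4]; ring
  · rw [tblK5_e_4_1, tblK5_e_1_4]; linear_combination (-(2 * ((σ s(3,0) : ℤ) * (σ s(0,2) : ℤ) * (σ s(2,4) : ℤ)))) * usq (σ s((4:Fin 5),(1:Fin 5)))
  · rw [tblK5_e_4_2, tblK5_e_2_4]; rw [show s((4:Fin 5),(2:Fin 5)) = s((2:Fin 5),(4:Fin 5)) from Sym2.eq_swap]; ring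
  · rw [tblK5_e_4_3, tblK5_e_3_4]; rw [show s((4:Fin 5),(3:Fin 5)) = s((3:Fin 5),(4:Fin 5)) from Sym2.eq_swap]; ring
  · simp at h

set_option maxHeartbeats 4000000 in
lemma key5c (σ : Sym2 (Fin 5) → ℤˣ) :
    ∀ ⦃v w₁ w₂ : Fin 5⦄, (⊤ : SimpleGraph (Fin 5)).Adj v w₁ → (⊤ : SimpleGraph (Fin 5)).Adj v w₂ → w₁ ≠ w₂ → tblK5 σ v w₁ ≠ tblK5 σ v w₂ := by
  have nn1 : ((σ s(0,1) : ℤ)).natAbs = 1 := unat _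
  have nn2 : ((σ s(0,1) : ℤ) * (σ s(1,2) : ℤ)).natAbs = 1 := by simp [Int.natAbs_mul, unat]
  have nn3 : ((σ s(0,1) : ℤ) * (σ s(1,2) : ℤ) * (σ s(2,3) : ℤ)).natAbs = 1 := by simp [Int.natAbs_mul, unat]
  have nn4 : ((σ s(0,1) : ℤ) * (σ s(1,2) : ℤ) * (σ s(2,3) : ℤ) * (σ s(3,4) : ℤ)).natAbs = 1 := by simp [Int.natAbs_mul, unat]
  have nn5 : ((σ s(3,0) : ℤ)).natAbs = 1 := unat _
  have nn6 : ((σ s(3,0) : ℤ) * (σ s(0,2) : ℤ)).natAbs = 1 := by simp [Int.natAbs_mul, unat]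
  have nn7 : ((σ s(3,0) : ℤ) * (σ s(0,2) : ℤ) * (σ s(2,4) : ℤ)).natAbs = 1 := by simp [Int.natAbs_mul, unat]
  have nn8 : ((σ s(3,0) : ℤ) * (σ s(0,2) : ℤ) * (σ s(2,4) : ℤ) * (σ s(4,1) : ℤ)).natAbs = 1 := by simp [Int.natAbs_mul, unat]
  intro v w₁ w₂ ha hb hne
  rcases fin5cases v with rfl|rfl|rfl|rfl|rfl <;> rcases fin5cases w₁ with rfl|rfl|rfl|rfl|rfl <;> rcases fin5cases w₂ with rfl|rfl|rfl|rfl|rfl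
  · simp at ha
  · simp at ha
  · simp at ha
  · simp at ha
  · simp at ha
  · simp at hb
  · simp at hne
  · rw [tblK5_e_0_1, tblK5_e_0_2]; omega
  · rw [tblK5_e_0_1, tblK5_e_0_3]; omega
  · rw [tblK5_e_0_1, tblK5_e_0_4]; omega
  · simp at hb
  · rw [tblK5_e_0_2, tblK5_e_0_1]; omega
  · simp at hne
  · rw [tblK5_e_0_2, tblK5_e_0_3]; omega
  · rw [tblK5_e_0_2, tblK5_e_0_4]; omega
  · simp at hb
  · rw [tblK5_e_0_3, tblK5_e_0_1]; omega
  · rw [tblK5_e_0_3, tblK5_e_0_2]; omega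
  · simp at hne
  · rw [tblK5_e_0_3, tblK5_e_0_4]; omega
  · simp at hb
  · rw [tblK5_e_0_4, tblK5_e_0_1]; omega
  · rw [tblK5_e_0_4, tblK5_e_0_2]; omega
  · rw [tblK5_e_0_4, tblK5_e_0_3]; omega
  · simp at hne
  · simp at hne
  · simp at hb
  · rw [tblK5_e_1_0, tblK5_e_1_2]; omega
  · rw [tblK5_e_1_0, tblK5_e_1_3]; omega
  · rw [tblK5_e_1_0, tblK5_e_1_4]; omega
  · simp at ha
  · simp at ha
  · simp at ha
  · simp at ha
  · simp at ha
  · rw [tblK5_e_1_2, tblK5_e_1_0]; omega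
  · simp at hb
  · simp at hne
  · rw [tblK5_e_1_2, tblK5_e_1_3]; omega
  · rw [tblK5_e_1_2, tblK5_e_1_4]; omega
  · rw [tblK5_e_1_3, tblK5_e_1_0]; omega
  · simp at hb
  · rw [tblK5_e_1_3, tblK5_e_1_2]; omega
  · simp at hne
  · rw [tblK5_e_1_3, tblK5_e_1_4]; omega
  · rw [tblK5_e_1_4, tblK5_e_1_0]; omega
  · simp at hb
  · rw [tblK5_e_1_4, tblK5_e_1_2]; omega
  · rw [tblK5_e_1_4, tblK5_e_1_3]; omega
  · simp at hne
  · simp at hne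
  · rw [tblK5_e_2_0, tblK5_e_2_1]; omega
  · simp at hb
  · rw [tblK5_e_2_0, tblK5_e_2_3]; omega
  · rw [tblK5_e_2_0, tblK5_e_2_4]; omega
  · rw [tblK5_e_2_1, tblK5_e_2_0]; omega
  · simp at hne
  · simp at hb
  · rw [tblK5_e_2_1, tblK5_e_2_3]; omega
  · rw [tblK5_e_2_1, tblK5_e_2_4]; omega
  · simp at ha
  · simp at ha
  · simp at ha
  · simp at ha
  · simp at ha
  · rw [tblK5_e_2_3, tblK5_e_2_0]; omega
  · rw [tblK5_e_2_3, tblK5_e_2_1]; omega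
  · simp at hb
  · simp at hne
  · rw [tblK5_e_2_3, tblK5_e_2_4]; omega
  · rw [tblK5_e_2_4, tblK5_e_2_0]; omega
  · rw [tblK5_e_2_4, tblK5_e_2_1]; omega
  · simp at hb
  · rw [tblK5_e_2_4, tblK5_e_2_3]; omega
  · simp at hne
  · simp at hne
  · rw [tblK5_e_3_0, tblK5_e_3_1]; omega
  · rw [tblK5_e_3_0, tblK5_e_3_2]; omega
  · simp at hb
  · rw [tblK5_e_3_0, tblK5_e_3_4]; omega
  · rw [tblK5_e_3_1, tblK5_e_3_0]; omega
  · simp at hne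
  · rw [tblK5_e_3_1, tblK5_e_3_2]; omega
  · simp at hb
  · rw [tblK5_e_3_1, tblK5_e_3_4]; omega
  · rw [tblK5_e_3_2, tblK5_e_3_0]; omega
  · rw [tblK5_e_3_2, tblK5_e_3_1]; omega
  · simp at hne
  · simp at hb
  · rw [tblK5_e_3_2, tblK5_e_3_4]; omega
  · simp at ha
  · simp at ha
  · simp at ha
  · simp at ha
  · simp at ha
  · rw [tblK5_e_3_4, tblK5_e_3_0]; omega
  · rw [tblK5_e_3_4, tblK5_e_3_1]; omega
  · rw [tblK5_e_3_4, tblK5_e_3_2]; omega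
  · simp at hb
  · simp at hne
  · simp at hne
  · rw [tblK5_e_4_0, tblK5_e_4_1]; omega
  · rw [tblK5_e_4_0, tblK5_e_4_2]; omega
  · rw [tblK5_e_4_0, tblK5_e_4_3]; omega
  · simp at hb
  · rw [tblK5_e_4_1, tblK5_e_4_0]; omega
  · simp at hne
  · rw [tblK5_e_4_1, tblK5_e_4_2]; omega
  · rw [tblK5_e_4_1, tblK5_e_4_3]; omega
  · simp at hb
  · rw [tblK5_e_4_2, tblK5_e_4_0]; omega
  · rw [tblK5_e_4_2, tblK5_e_4_1]; omega
  · simp at hne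
  · rw [tblK5_e_4_2, tblK5_e_4_3]; omega
  · simp at hb
  · rw [tblK5_e_4_3, tblK5_e_4_0]; omega
  · rw [tblK5_e_4_3, tblK5_e_4_1]; omega
  · rw [tblK5_e_4_3, tblK5_e_4_2]; omega
  · simp at hne
  · simp at hb
  · simp at ha
  · simp at ha
  · simp at ha
  · simp at ha
  · simp at ha

lemma key5 (σ : Sym2 (Fin 5) → ℤˣ) :
    IsProperSignedEdgeColoring (⊤ : SimpleGraph (Fin 5)) σ 5 (tblK5 σ) :=
  ⟨key5a σ, key5b σ, key5c σ ⟩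

def Distinct5 (a0 a1 a2 a3 a4 : Fin 5) : Prop :=
  a0 ≠ a1 ∧ a0 ≠ a2 ∧ a0 ≠ a3 ∧ a0 ≠ a4 ∧ a1 ≠ a2 ∧ a1 ≠ a3 ∧ a1 ≠ a4 ∧ a2 ≠ a3 ∧ a2 ≠ a4 ∧ a3 ≠ a4

def pentL (a0 a1 a2 a3 a4 : Fin 5) : List (Sym2 (Fin 5)) :=
  [s(a0,a1), s(a1,a2), s(a2,a3), s(a3,a4), s(a4,a0)]

def Decomp (σ : Sym2 (Fin 5) → ℤˣ) : Prop :=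
  ∃ a0 a1 a2 a3 a4 b0 b1 b2 b3 b4 : Fin 5,
    Distinct5 a0 a1 a2 a3 a4 ∧ Distinct5 b0 b1 b2 b3 b4 ∧
    ((pentL a0 a1 a2 a3 a4).map σ).prod = 1 ∧
    ((pentL b0 b1 b2 b3 b4).map σ).prod = 1 ∧
    (∀ v w : Fin 5, v ≠ w → s(v,w) ∈ pentL a0 a1 a2 a3 a4 ∨ s(v,w) ∈ pentL b0 b1 b2 b3 b4) ∧
    (∀ e : Sym2 (Fin 5), ¬(e ∈ pentL a0 a1 a2 a3 a4 ∧ e ∈ pentL b0 b1 b2 b3 b4))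

lemma cover5aux : ∀ a0 a1 a2 a3 a4 v : Fin 5, a0≠a1 → a0≠a2 → a0≠a3 → a0≠a4 → a1≠a2 → a1≠a3 → a1≠a4 → a2≠a3 → a2≠a4 → a3≠a4 →
    (v = a0 ∨ v = a1 ∨ v = a2 ∨ v = a3 ∨ v = a4) := by decide

lemma cover5 {a0 a1 a2 a3 a4 : Fin 5} (h : Distinct5 a0 a1 a2 a3 a4) (v : Fin 5) :
    v = a0 ∨ v = a1 ∨ v = a2 ∨ v = a3 ∨ v = a4 := by
  obtain ⟨h1,h2,h3,h4,h5,h6,h7,h8,h9,h10⟩ := h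
  exact cover5aux a0 a1 a2 a3 a4 v h1 h2 h3 h4 h5 h6 h7 h8 h9 h10

lemma other_elt {N : Finset (Fin 5)} (h : N.card = 2) {u : Fin 5} (hu : u ∈ N) :
    ∃ u', u' ≠ u ∧ N = {u, u'} := by
  obtain ⟨x, y, hxy, rfl⟩ := Finset.card_eq_two.mp h
  rcases Finset.mem_insert.mp hu with rfl | h'
  · exact ⟨y, hxy.symm, rfl⟩
  · rw [Finset.mem_singleton] at h'
    subst h'
    exact ⟨x, hxy, by rw [Finset.pair_comm]⟩

lemma pair_mem_left {x y : Fin 5} : x ∈ ({x, y} : Finset (Fin 5)) := by simp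
lemma pair_mem_right {x y : Fin 5} : y ∈ ({x, y} : Finset (Fin 5)) := by simp
lemma pair_cases {x y u : Fin 5} (h : u ∈ ({x, y} : Finset (Fin 5))) : u = x ∨ u = y := by
  simpa using h

lemma cycle_extract (N : Fin 5 → Finset (Fin 5)) (hcard : ∀ v, (N v).card = 2)
    (hirr : ∀ v, v ∉ N v) (hsym : ∀ v w, w ∈ N v → v ∈ N w) :
    ∃ a0 a1 a2 a3 a4 : Fin 5, Distinct5 a0 a1 a2 a3 a4 ∧
      a1 ∈ N a0 ∧ a2 ∈ N a1 ∧ a3 ∈ N a2 ∧ a4 ∈ N a3 ∧ a0 ∈ N a4 ∧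
      (∀ v w, w ∈ N v → s(v,w) ∈ pentL a0 a1 a2 a3 a4) := by
  classical
  obtain ⟨p, q, hpq, hN0⟩ := Finset.card_eq_two.mp (hcard 0)
  have hp0 : p ∈ N 0 := by rw [hN0]; exact pair_mem_left
  have hq0 : q ∈ N 0 := by rw [hN0]; exact pair_mem_right
  have hp_ne : p ≠ 0 := fun h => hirr 0 (h ▸ hp0)
  have hq_ne : q ≠ 0 := fun h => hirr 0 (h ▸ hq0)
  obtain ⟨c, hc0, hNp⟩ := other_elt (hcard p) (hsym 0 p hp0)
  have hcNp : c ∈ N p := by rw [hNp]; exact pair_mem_right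
  have hc_ne_p : c ≠ p := fun h => hirr p (h ▸ hcNp)
  obtain ⟨d, hdp, hNc⟩ := other_elt (hcard c) (hsym p c hcNp)
  have hdNc : d ∈ N c := by rw [hNc]; exact pair_mem_right
  have hd_ne_c : d ≠ c := fun h => hirr c (h ▸ hdNc)
  -- d ≠ 0 : else triangle 0-p-c and the two leftover vertices have no room
  have hd_ne_0 : d ≠ 0 := by
    intro hd0
    have h0Nc : (0 : Fin 5) ∈ N c := hd0 ▸ hdNc
    have hc_in_N0 : c ∈ N 0 := hsym c 0 h0Nc
    have hcq : c = q := by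
      rcases pair_cases (hN0 ▸ hc_in_N0) with h | h
      · exact absurd h hc_ne_p
      · exact h
    rw [← hcq] at hN0
    -- N 0 = {p, c}, N p = {0, c}, N c = {p, 0}
    rw [hd0] at hNc
    have hcard3 : ({0, p, c} : Finset (Fin 5)).card = 3 := by
      rw [Finset.card_insert_of_notMem (by simp [hp_ne.symm, (hc0 : c ≠ 0).symm]),
        Finset.card_insert_of_notMem (by simp [hc_ne_p.symm])]
      simp
    have hsd : (Finset.univ \ {0, p, c} : Finset (Fin 5)).card = 2 := by
      rw [Finset.card_sdiff_of_subset (Finset.subset_univ _), hcard3]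
      rfl
    obtain ⟨e1, e2, he12, hE⟩ := Finset.card_eq_two.mp hsd
    have he1 : e1 ∈ Finset.univ \ ({0, p, c} : Finset (Fin 5)) := by rw [hE]; exact pair_mem_left
    simp only [Finset.mem_sdiff, Finset.mem_univ, true_and, Finset.mem_insert,
      Finset.mem_singleton, not_or] at he1
    obtain ⟨s1, s2, hs12, hNe1⟩ := Finset.card_eq_two.mp (hcard e1)
    have key : ∀ u, u ∈ N e1 → u = e2 := by
      intro u hu
      have hue1 : e1 ∈ N u := hsym e1 u hu
      have hu_ne : u ≠ e1 := fun h => hirr e1 (h ▸ hu)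
      have hu_n0 : u ≠ 0 := by
        intro h; rw [h, hN0] at hue1
        rcases pair_cases hue1 with h' | h'
        · exact he1.2.1 h'
        · exact he1.2.2 h'
      have hu_np : u ≠ p := by
        intro h; rw [h, hNp] at hue1
        rcases pair_cases hue1 with h' | h'
        · exact he1.1 h'
        · exact he1.2.2 h'
      have hu_nc : u ≠ c := by
        intro h; rw [h, hNc] at hue1
        rcases pair_cases hue1 with h' | h'
        · exact he1.2.1 h'
        · exact he1.1 h'
      have : u ∈ Finset.univ \ ({0, p, c} : Finset (Fin 5)) := by
        simp [hu_n0, hu_np, hu_nc]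
      rw [hE] at this
      rcases pair_cases this with h | h
      · exact absurd h hu_ne
      · exact h
    exact hs12 ((key s1 (by rw [hNe1]; exact pair_mem_left)).trans
      (key s2 (by rw [hNe1]; exact pair_mem_right)).symm)
  -- the next vertex e after d
  obtain ⟨e, hed, hNd⟩ := other_elt (hcard d) (hsym c d hdNc)
  have heNd : e ∈ N d := by rw [hNd]; exact pair_mem_right
  have he_ne_d : e ≠ d := fun h => hirr d (h ▸ heNd)
  have he_ne_p : e ≠ p := by
    intro h
    have hdNp : d ∈ N p := hsym d p (h ▸ heNd)
    rcases pair_cases (hNp ▸ hdNp) with h' | h'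
    · exact hd_ne_0 h'
    · exact hd_ne_c h'
  have he_ne_0 : e ≠ 0 := by
    intro he0
    have h0Nd : (0 : Fin 5) ∈ N d := he0 ▸ heNd
    have hdN0 : d ∈ N 0 := hsym d 0 h0Nd
    have hdq : d = q := by
      rcases pair_cases (hN0 ▸ hdN0) with h | h
      · exact absurd h hdp
      · exact h
    rw [← hdq] at hN0
    rw [he0] at hNd
    -- 4-cycle 0-p-c-d; leftover vertex f
    have hcard4 : ({0, p, c, d} : Finset (Fin 5)).card = 4 := by
      rw [Finset.card_insert_of_notMem (by simp [hp_ne.symm, (hc0 : c ≠ 0).symm, hd_ne_0.symm]),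
        Finset.card_insert_of_notMem (by simp [hc_ne_p.symm, hdp.symm]),
        Finset.card_insert_of_notMem (by simp [hd_ne_c.symm])]
      simp
    have hsd : (Finset.univ \ {0, p, c, d} : Finset (Fin 5)).card = 1 := by
      rw [Finset.card_sdiff_of_subset (Finset.subset_univ _), hcard4]
      rfl
    obtain ⟨f, hF⟩ := Finset.card_eq_one.mp hsd
    have hf : f ∈ Finset.univ \ ({0, p, c, d} : Finset (Fin 5)) := by rw [hF]; simp
    simp only [Finset.mem_sdiff, Finset.mem_univ, true_and, Finset.mem_insert,
      Finset.mem_singleton, not_or] at hf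
    obtain ⟨s1, s2, hs12, hNf⟩ := Finset.card_eq_two.mp (hcard f)
    have hs1Nf : s1 ∈ N f := by rw [hNf]; exact pair_mem_left
    have hfNs1 : f ∈ N s1 := hsym f s1 hs1Nf
    have hs1_ne : s1 ≠ f := fun h => hirr f (h ▸ hs1Nf)
    have : s1 = 0 ∨ s1 = p ∨ s1 = c ∨ s1 = d ∨ s1 = f :=
      cover5aux 0 p c d f s1 hp_ne.symm (hc0 : c ≠ 0).symm hd_ne_0.symm (fun h => hf.1 h.symm)
        hc_ne_p.symm (fun h => hdp h.symm : p ≠ d) (fun h => hf.2.1 h.symm)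
        hd_ne_c.symm (fun h => hf.2.2.1 h.symm) (fun h => hf.2.2.2 h.symm)
    rcases this with h | h | h | h | h
    · rw [h, hN0] at hfNs1
      rcases pair_cases hfNs1 with h' | h'
      · exact hf.2.1 h'
      · exact hf.2.2.2 h'
    · rw [h, hNp] at hfNs1
      rcases pair_cases hfNs1 with h' | h'
      · exact hf.1 h'
      · exact hf.2.2.1 h'
    · rw [h, hNc] at hfNs1
      rcases pair_cases hfNs1 with h' | h'
      · exact hf.2.1 h'
      · exact hf.2.2.2 h'
    · rw [h, hNd] at hfNs1
      rcases pair_cases hfNs1 with h' | h'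
      · exact hf.2.2.1 h'
      · exact hf.1 h'
    · exact hs1_ne h
  -- now 0, p, c, d, e are pairwise distinct
  have he_ne_c : e ≠ c := hed
  have hdist : Distinct5 0 p c d e :=
    ⟨hp_ne.symm, (hc0 : c ≠ 0).symm, hd_ne_0.symm, he_ne_0.symm, hc_ne_p.symm,
      (fun h => hdp h.symm : p ≠ d), (fun h => he_ne_p h.symm : p ≠ e),
      hd_ne_c.symm, (fun h => he_ne_c h.symm : c ≠ e), (fun h => he_ne_d h.symm : d ≠ e)⟩
  -- q = e, so 0 ∈ N e and N e = {d, 0}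
  have h0Nq : (0:Fin 5) ∈ N q := hsym 0 q hq0
  have hqe : q = e := by
    rcases cover5 hdist q with h | h | h | h | h
    · exact absurd h hq_ne
    · exact absurd h.symm hpq
    · rw [h, hNc] at h0Nq
      rcases pair_cases h0Nq with h' | h'
      · exact absurd h'.symm hp_ne
      · exact absurd h'.symm hd_ne_0
    · rw [h, hNd] at h0Nq
      rcases pair_cases h0Nq with h' | h'
      · exact absurd h'.symm (hc0 : c ≠ 0)
      · exact absurd h'.symm he_ne_0
    · exact h
  rw [hqe] at hN0 h0Nq
  have hdNe : d ∈ N e := hsym d e heNd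
  have hNe : N e = {d, 0} := by
    obtain ⟨z, hz, hNe⟩ := other_elt (hcard e) hdNe
    rcases pair_cases (hNe ▸ h0Nq) with h | h
    · exact absurd h.symm hd_ne_0
    · rw [← h] at hNe; exact hNe
  refine ⟨0, p, c, d, e, hdist, by rw [hN0]; exact pair_mem_left, hcNp, hdNc, heNd,
    by rw [hNe]; exact pair_mem_right, ?_⟩
  intro v w hw
  rcases cover5 hdist v with rfl | rfl | rfl | rfl | rfl
  · rcases pair_cases (hN0 ▸ hw) with rfl | rfl <;> simp [pentL]
  · rcases pair_cases (hNp ▸ hw) with rfl | rfl <;> simp [pentL]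
  · rcases pair_cases (hNc ▸ hw) with rfl | rfl <;> simp [pentL]
  · rcases pair_cases (hNd ▸ hw) with rfl | rfl <;> simp [pentL]
  · rcases pair_cases (hNe ▸ hw) with rfl | rfl <;> simp [pentL]

section L3
variable (σ : Sym2 (Fin 5) → ℤˣ) (γ : Fin 5 → Fin 5 → ℤ)

lemma top_adj' {v w : Fin 5} (h : v ≠ w) : (⊤ : SimpleGraph (Fin 5)).Adj v w := h
lemma top_adj_ne {v w : Fin 5} (h : (⊤ : SimpleGraph (Fin 5)).Adj v w) : v ≠ w := h

lemma habs (hb : ∀ ⦃v w : Fin 5⦄, (⊤ : SimpleGraph (Fin 5)).Adj v w → γ v w = (-(σ s(v, w) : ℤ)) * γ w v)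
    {v w : Fin 5} (h : v ≠ w) : (γ v w).natAbs = (γ w v).natAbs := by
  have h1 := hb (top_adj' h)
  rw [h1, Int.natAbs_mul]
  simp [Int.natAbs_neg, unat]

lemma rev_eq (hb : ∀ ⦃v w : Fin 5⦄, (⊤ : SimpleGraph (Fin 5)).Adj v w → γ v w = (-(σ s(v, w) : ℤ)) * γ w v)
    {v w : Fin 5} (h : v ≠ w) : γ w v = -(σ s(v,w) : ℤ) * γ v w := by
  have h1 := hb (top_adj' h)
  linear_combination (σ s(v,w) : ℤ) * h1 - γ w v * usq (σ s(v,w))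

lemma step (hprop : IsProperSignedEdgeColoring (⊤ : SimpleGraph (Fin 5)) σ 4 γ)
    {k : ℕ} {x y z : Fin 5} (hxy : x ≠ y) (hyz : y ≠ z) (hxz : x ≠ z)
    (h1 : (γ x y).natAbs = k) (h2 : (γ y z).natAbs = k) :
    γ y z = (σ s(x,y) : ℤ) * γ x y := by
  obtain ⟨ha, hb, hc⟩ := hprop
  have hrev : γ y x = -(σ s(x,y) : ℤ) * γ x y := rev_eq σ γ hb hxy
  have hne : γ y x ≠ γ y z := hc (top_adj' hxy.symm) (top_adj' hyz) hxz
  have habs' : (γ y x).natAbs = k := by rw [← habs σ γ hb hxy.symm] at h1; exact h1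
  have hopp : γ y z = -(γ y x) := by omega
  rw [hopp, hrev]; ring

lemma absval1 {c : ℤ} (h : c.natAbs = 1) : c = 1 ∨ c = -1 := by omega
lemma absval2 {c : ℤ} (h : c.natAbs = 2) : c = 2 ∨ c = -2 := by omega

lemma natAbs_cases (hprop : IsProperSignedEdgeColoring (⊤ : SimpleGraph (Fin 5)) σ 4 γ)
    {v w : Fin 5} (h : v ≠ w) : (γ v w).natAbs = 1 ∨ (γ v w).natAbs = 2 := by
  obtain ⟨hle, hne0⟩ := hprop.1 (top_adj' h)
  have := hne0 (by decide)
  omega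

noncomputable def Nset (k : ℕ) (v : Fin 5) : Finset (Fin 5) :=
  Finset.univ.filter (fun w => w ≠ v ∧ (γ v w).natAbs = k)

lemma Nset_card (hprop : IsProperSignedEdgeColoring (⊤ : SimpleGraph (Fin 5)) σ 4 γ)
    (v : Fin 5) : (Nset γ 1 v).card = 2 ∧ (Nset γ 2 v).card = 2 := by
  classical
  obtain ⟨ha, hb, hc⟩ := hprop
  have hinj : ∀ k, Set.InjOn (γ v) (Nset γ k v) := by
    intro k w1 hw1 w2 hw2 heq
    simp only [Nset, Finset.coe_filter, Set.mem_setOf_eq] at hw1 hw2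
    by_contra hne
    exact hc (top_adj' (Ne.symm hw1.2.1)) (top_adj' (Ne.symm hw2.2.1)) hne heq
  have h1 : (Nset γ 1 v).card ≤ 2 := by
    have := Finset.card_le_card_of_injOn (γ v) (t := ({-1, 1} : Finset ℤ))
      (fun w hw => by
        simp only [Nset, Finset.mem_coe, Finset.mem_filter] at hw
        have : (γ v w).natAbs = 1 := hw.2.2
        simp only [Finset.mem_coe, Finset.mem_insert, Finset.mem_singleton]
        omega) (hinj 1)
    simpa using this
  have h2 : (Nset γ 2 v).card ≤ 2 := by
    have := Finset.card_le_card_of_injOn (γ v) (t := ({-2, 2} : Finset ℤ))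
      (fun w hw => by
        simp only [Nset, Finset.mem_coe, Finset.mem_filter] at hw
        have : (γ v w).natAbs = 2 := hw.2.2
        simp only [Finset.mem_coe, Finset.mem_insert, Finset.mem_singleton]
        omega) (hinj 2)
    simpa using this
  have hdisj : Disjoint (Nset γ 1 v) (Nset γ 2 v) := by
    rw [Finset.disjoint_left]
    intro w hw1 hw2
    simp only [Nset, Finset.mem_filter] at hw1 hw2
    omega
  have hunion : Nset γ 1 v ∪ Nset γ 2 v = Finset.univ.filter (fun w => w ≠ v) := by
    ext w
    simp only [Nset, Finset.mem_union, Finset.mem_filter, Finset.mem_univ, true_and]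
    constructor
    · rintro (⟨h, _⟩ | ⟨h, _⟩) <;> exact h
    · intro h
      rcases natAbs_cases σ γ ⟨ha, hb, hc⟩ (Ne.symm h) with h' | h'
      · exact Or.inl ⟨h, h'⟩
      · exact Or.inr ⟨h, h'⟩
  have hcard4 : (Finset.univ.filter (fun w => w ≠ v) : Finset (Fin 5)).card = 4 := by
    rcases fin5cases v with rfl | rfl | rfl | rfl | rfl <;> decide
  have := Finset.card_union_of_disjoint hdisj
  rw [hunion, hcard4] at this
  omega

lemma Nset_mem {k : ℕ} {v w : Fin 5} :
    w ∈ Nset γ k v ↔ (w ≠ v ∧ (γ v w).natAbs = k) := by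
  simp [Nset]

set_option maxHeartbeats 2000000 in
lemma proper4_decomp (hprop : IsProperSignedEdgeColoring (⊤ : SimpleGraph (Fin 5)) σ 4 γ) :
    Decomp σ := by
  classical
  obtain ⟨ha, hb, hc⟩ := hprop
  have hsymN : ∀ k (v w : Fin 5), w ∈ Nset γ k v → v ∈ Nset γ k w := by
    intro k v w hw
    rw [Nset_mem] at hw ⊢
    exact ⟨hw.1.symm, by rw [← habs σ γ hb (Ne.symm hw.1)]; exact hw.2⟩
  have hirrN : ∀ k (v : Fin 5), v ∉ Nset γ k v := by
    intro k v h
    rw [Nset_mem] at h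
    exact h.1 rfl
  obtain ⟨a0, a1, a2, a3, a4, hdA, mA01, mA12, mA23, mA34, mA40, hcovA⟩ :=
    cycle_extract (Nset γ 1) (fun v => (Nset_card σ γ ⟨ha, hb, hc⟩ v).1) (hirrN 1) (hsymN 1)
  obtain ⟨b0, b1, b2, b3, b4, hdB, mB01, mB12, mB23, mB34, mB40, hcovB⟩ :=
    cycle_extract (Nset γ 2) (fun v => (Nset_card σ γ ⟨ha, hb, hc⟩ v).2) (hirrN 2) (hsymN 2)
  have prodpos : ∀ (k : ℕ), k = 1 ∨ k = 2 → ∀ c0 c1 c2 c3 c4 : Fin 5, Distinct5 c0 c1 c2 c3 c4 →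
      (γ c0 c1).natAbs = k → (γ c1 c2).natAbs = k → (γ c2 c3).natAbs = k →
      (γ c3 c4).natAbs = k → (γ c4 c0).natAbs = k →
      ((pentL c0 c1 c2 c3 c4).map σ).prod = 1 := by
    intro k hk c0 c1 c2 c3 c4 hd n0 n1 n2 n3 n4
    obtain ⟨d1, d2, d3, d4, d5, d6, d7, d8, d9, d10⟩ := hd
    have e1 : γ c1 c2 = (σ s(c0,c1) : ℤ) * γ c0 c1 :=
      step σ γ ⟨ha, hb, hc⟩ d1 d5 d2 n0 n1
    have e2 : γ c2 c3 = (σ s(c1,c2) : ℤ) * γ c1 c2 :=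
      step σ γ ⟨ha, hb, hc⟩ d5 d8 d6 n1 n2
    have e3 : γ c3 c4 = (σ s(c2,c3) : ℤ) * γ c2 c3 :=
      step σ γ ⟨ha, hb, hc⟩ d8 d10 d9 n2 n3
    have e4 : γ c4 c0 = (σ s(c3,c4) : ℤ) * γ c3 c4 :=
      step σ γ ⟨ha, hb, hc⟩ d10 d4.symm d3.symm n3 n4
    have e5 : γ c0 c1 = (σ s(c4,c0) : ℤ) * γ c4 c0 :=
      step σ γ ⟨ha, hb, hc⟩ d4.symm d1 d7.symm n4 n0
    have hP : γ c0 c1 = (σ s(c4,c0) : ℤ) * ((σ s(c3,c4) : ℤ) * ((σ s(c2,c3) : ℤ) *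
        ((σ s(c1,c2) : ℤ) * ((σ s(c0,c1) : ℤ) * γ c0 c1)))) := by
      rw [← e1, ← e2, ← e3, ← e4, ← e5]
    rw [Units.ext_iff]
    simp only [pentL, List.map_cons, List.map_nil, List.prod_cons, List.prod_nil,
      Units.val_mul, Units.val_one, mul_one]
    rcases hk with rfl | rfl
    · rcases absval1 n0 with hy | hy <;> rw [hy] at hP
      · linear_combination -hP
      · linear_combination hP
    · rcases absval2 n0 with hy | hy <;> rw [hy] at hP
      · have h2 := mul_left_cancel₀ (two_ne_zero (α := ℤ))
          (show (2:ℤ) * ((σ s(c4,c0) : ℤ) * ((σ s(c3,c4) : ℤ) * ((σ s(c2,c3) : ℤ) *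
            ((σ s(c1,c2) : ℤ) * (σ s(c0,c1) : ℤ))))) = 2 * 1 by linear_combination -hP)
        linear_combination h2
      · have h2 := mul_left_cancel₀ (two_ne_zero (α := ℤ))
          (show (2:ℤ) * ((σ s(c4,c0) : ℤ) * ((σ s(c3,c4) : ℤ) * ((σ s(c2,c3) : ℤ) *
            ((σ s(c1,c2) : ℤ) * (σ s(c0,c1) : ℤ))))) = 2 * 1 by linear_combination hP)
        linear_combination h2
  have nA0 := ((Nset_mem γ).mp mA01).2
  have nA1 := ((Nset_mem γ).mp mA12).2
  have nA2 := ((Nset_mem γ).mp mA23).2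
  have nA3 := ((Nset_mem γ).mp mA34).2
  have nA4 := ((Nset_mem γ).mp mA40).2
  have nB0 := ((Nset_mem γ).mp mB01).2
  have nB1 := ((Nset_mem γ).mp mB12).2
  have nB2 := ((Nset_mem γ).mp mB23).2
  have nB3 := ((Nset_mem γ).mp mB34).2
  have nB4 := ((Nset_mem γ).mp mB40).2
  have hprodA := prodpos 1 (Or.inl rfl) a0 a1 a2 a3 a4 hdA nA0 nA1 nA2 nA3 nA4
  have hprodB := prodpos 2 (Or.inr rfl) b0 b1 b2 b3 b4 hdB nB0 nB1 nB2 nB3 nB4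
  -- edges in pentL A have colour of abs 1, pentL B abs 2
  have pentA_abs : ∀ e ∈ pentL a0 a1 a2 a3 a4, ∃ x y : Fin 5, x ≠ y ∧ e = s(x,y) ∧ (γ x y).natAbs = 1 := by
    intro e he
    obtain ⟨d1, d2, d3, d4, d5, d6, d7, d8, d9, d10⟩ := hdA
    simp only [pentL, List.mem_cons, List.not_mem_nil, or_false] at he
    rcases he with rfl | rfl | rfl | rfl | rfl
    · exact ⟨a0, a1, d1, rfl, nA0⟩
    · exact ⟨a1, a2, d5, rfl, nA1⟩
    · exact ⟨a2, a3, d8, rfl, nA2⟩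
    · exact ⟨a3, a4, d10, rfl, nA3⟩
    · exact ⟨a4, a0, d4.symm, rfl, nA4⟩
  have pentB_abs : ∀ e ∈ pentL b0 b1 b2 b3 b4, ∃ x y : Fin 5, x ≠ y ∧ e = s(x,y) ∧ (γ x y).natAbs = 2 := by
    intro e he
    obtain ⟨d1, d2, d3, d4, d5, d6, d7, d8, d9, d10⟩ := hdB
    simp only [pentL, List.mem_cons, List.not_mem_nil, or_false] at he
    rcases he with rfl | rfl | rfl | rfl | rfl
    · exact ⟨b0, b1, d1, rfl, nB0⟩
    · exact ⟨b1, b2, d5, rfl, nB1⟩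
    · exact ⟨b2, b3, d8, rfl, nB2⟩
    · exact ⟨b3, b4, d10, rfl, nB3⟩
    · exact ⟨b4, b0, d4.symm, rfl, nB4⟩
  refine ⟨a0, a1, a2, a3, a4, b0, b1, b2, b3, b4, hdA, hdB, hprodA, hprodB, ?_, ?_⟩
  · intro v w hvw
    rcases natAbs_cases σ γ ⟨ha, hb, hc⟩ hvw with h | h
    · exact Or.inl (hcovA v w ((Nset_mem γ).mpr ⟨hvw.symm, h⟩))
    · exact Or.inr (hcovB v w ((Nset_mem γ).mpr ⟨hvw.symm, h⟩))
  · rintro e ⟨heA, heB⟩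
    obtain ⟨x, y, hxy, rfl, h1⟩ := pentA_abs e heA
    obtain ⟨x', y', hxy', heq, h2⟩ := pentB_abs _ heB
    rcases Sym2.eq_iff.mp heq with ⟨rfl, rfl⟩ | ⟨rfl, rfl⟩
    · omega
    · rw [habs σ γ hb hxy] at h1
      omega

end L3

section L2
open SimpleGraph

def pentG (a0 a1 a2 a3 a4 : Fin 5) : List (Sym2 (Fin 5)) :=
  [s(a0,a2), s(a2,a4), s(a4,a1), s(a1,a3), s(a3,a0)]

lemma pentagram_prod {σ : Sym2 (Fin 5) → ℤˣ} {a0 a1 a2 a3 a4 b0 b1 b2 b3 b4 : Fin 5}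
    (hdA : Distinct5 a0 a1 a2 a3 a4) (hdB : Distinct5 b0 b1 b2 b3 b4)
    (prodB : ((pentL b0 b1 b2 b3 b4).map σ).prod = 1)
    (hcov : ∀ v w : Fin 5, v ≠ w → s(v,w) ∈ pentL a0 a1 a2 a3 a4 ∨ s(v,w) ∈ pentL b0 b1 b2 b3 b4)
    (hdisj : ∀ e : Sym2 (Fin 5), ¬(e ∈ pentL a0 a1 a2 a3 a4 ∧ e ∈ pentL b0 b1 b2 b3 b4)) :
    ((pentG a0 a1 a2 a3 a4).map σ).prod = 1 := by
  obtain ⟨d1, d2, d3, d4, d5, d6, d7, d8, d9, d10⟩ := hdA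
  have hsub : ∀ e ∈ pentG a0 a1 a2 a3 a4, e ∈ pentL b0 b1 b2 b3 b4 := by
    intro e he
    have hnotA : e ∉ pentL a0 a1 a2 a3 a4 := by
      intro heA
      simp only [pentG, List.mem_cons, List.not_mem_nil, or_false] at he
      rcases he with rfl | rfl | rfl | rfl | rfl <;>
        (simp only [pentL, List.mem_cons, List.not_mem_nil, or_false, Sym2.eq_iff] at heA;
         tauto)
    simp only [pentG, List.mem_cons, List.not_mem_nil, or_false] at he
    rcases he with rfl | rfl | rfl | rfl | rfl
    · exact (hcov a0 a2 d2).resolve_left hnotA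
    · exact (hcov a2 a4 d9).resolve_left hnotA
    · exact (hcov a4 a1 d7.symm).resolve_left hnotA
    · exact (hcov a1 a3 d6).resolve_left hnotA
    · exact (hcov a3 a0 d3.symm).resolve_left hnotA
  have hnodupG : (pentG a0 a1 a2 a3 a4).Nodup := by
    simp only [pentG, List.nodup_cons, List.mem_cons, List.not_mem_nil, or_false,
      List.nodup_nil, and_true, Sym2.eq_iff, not_or]
    tauto
  have hperm : (pentG a0 a1 a2 a3 a4).Perm (pentL b0 b1 b2 b3 b4) := by
    refine List.Subperm.perm_of_length_le (hnodupG.subperm hsub) (by simp [pentL, pentG])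
  rw [← prodB]
  exact ((hperm.map σ).prod_eq)

lemma coe_pent_prod {σ : Sym2 (Fin 5) → ℤˣ} {l : List (Sym2 (Fin 5))} {e1 e2 e3 e4 e5 : Sym2 (Fin 5)}
    (hl : l = [e1, e2, e3, e4, e5]) (h : (l.map σ).prod = 1) :
    (σ e1 : ℤ) * (σ e2 : ℤ) * (σ e3 : ℤ) * (σ e4 : ℤ) * (σ e5 : ℤ) = 1 := by
  subst hl
  rw [Units.ext_iff] at h
  simp only [List.map_cons, List.map_nil, List.prod_cons, List.prod_nil,
    Units.val_mul, Units.val_one, mul_one] at h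
  linear_combination h

def pi5 (a0 a1 a2 a3 a4 : Fin 5) : Fin 5 → Fin 5 := fun i =>
  match i.val with
  | 0 => a0
  | 1 => a1
  | 2 => a2
  | 3 => a3
  | _ => a4

lemma decomp_proper4 {σ : Sym2 (Fin 5) → ℤˣ} (h : Decomp σ) :
    ∃ γ : Fin 5 → Fin 5 → ℤ, IsProperSignedEdgeColoring (⊤ : SimpleGraph (Fin 5)) σ 4 γ := by
  classical
  obtain ⟨a0, a1, a2, a3, a4, b0, b1, b2, b3, b4, hdA, hdB, prodA, prodB, hcov, hdisj⟩ := h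
  set π := pi5 a0 a1 a2 a3 a4 with hπ
  have hsurj : Function.Surjective π := by
    intro v
    rcases cover5 hdA v with rfl | rfl | rfl | rfl | rfl
    · exact ⟨0, rfl⟩
    · exact ⟨1, rfl⟩
    · exact ⟨2, rfl⟩
    · exact ⟨3, rfl⟩
    · exact ⟨4, rfl⟩
  have hinj : Function.Injective π := Finite.injective_iff_surjective.mpr hsurj
  set E : Fin 5 ≃ Fin 5 := Equiv.ofBijective π ⟨hinj, hsurj⟩ with hE
  set σ' : Sym2 (Fin 5) → ℤˣ := fun e => σ (Sym2.map π e) with hσ'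
  have hσ'eval : ∀ i j : Fin 5, σ' s(i,j) = σ s(π i, π j) := by
    intro i j
    simp only [hσ', Sym2.map_pair_eq]
  have h1 : (σ' s(0,1) : ℤ) * (σ' s(1,2) : ℤ) * (σ' s(2,3) : ℤ) * (σ' s(3,4) : ℤ) * (σ' s(4,0) : ℤ) = 1 := by
    rw [hσ'eval 0 1, hσ'eval 1 2, hσ'eval 2 3, hσ'eval 3 4, hσ'eval 4 0]
    show (σ s(a0,a1) : ℤ) * (σ s(a1,a2) : ℤ) * (σ s(a2,a3) : ℤ) * (σ s(a3,a4) : ℤ) * (σ s(a4,a0) : ℤ) = 1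
    exact coe_pent_prod rfl prodA
  have h2 : (σ' s(0,2) : ℤ) * (σ' s(2,4) : ℤ) * (σ' s(4,1) : ℤ) * (σ' s(1,3) : ℤ) * (σ' s(3,0) : ℤ) = 1 := by
    rw [hσ'eval 0 2, hσ'eval 2 4, hσ'eval 4 1, hσ'eval 1 3, hσ'eval 3 0]
    show (σ s(a0,a2) : ℤ) * (σ s(a2,a4) : ℤ) * (σ s(a4,a1) : ℤ) * (σ s(a1,a3) : ℤ) * (σ s(a3,a0) : ℤ) = 1
    exact coe_pent_prod rfl (pentagram_prod hdA hdB prodB hcov hdisj)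
  obtain ⟨ka, kb, kc⟩ := key4 σ' h1 h2
  refine ⟨fun v w => tblK4 σ' (E.symm v) (E.symm w), ?_, ?_, ?_⟩
  · intro v w hvw
    have : E.symm v ≠ E.symm w := fun hh => (top_adj_ne hvw) (by
      have := congrArg E hh
      simpa using this)
    exact ka (top_adj' this)
  · intro v w hvw
    have hne : E.symm v ≠ E.symm w := fun hh => (top_adj_ne hvw) (by
      have := congrArg E hh
      simpa using this)
    have hb' := kb (top_adj' hne)
    have hs : σ' s(E.symm v, E.symm w) = σ s(v, w) := by
      rw [hσ'eval]
      congr 1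
      have h1 : π (E.symm v) = v := E.apply_symm_apply v
      have h2 : π (E.symm w) = w := E.apply_symm_apply w
      rw [h1, h2]
    rw [hs] at hb'
    exact hb'
  · intro v w1 w2 hv1 hv2 hne
    have e1 : E.symm v ≠ E.symm w1 := fun hh => (top_adj_ne hv1) (by
      have := congrArg E hh; simpa using this)
    have e2 : E.symm v ≠ E.symm w2 := fun hh => (top_adj_ne hv2) (by
      have := congrArg E hh; simpa using this)
    have e3 : E.symm w1 ≠ E.symm w2 := fun hh => hne (by
      have := congrArg E hh; simpa using this)
    exact kc (top_adj' e1) (top_adj' e2) e3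

end L2

section Assembly
open SimpleGraph

lemma lower_bound_aux : ∀ c1 c2 c3 c4 : ℤ, c1.natAbs ≤ 1 → c2.natAbs ≤ 1 → c3.natAbs ≤ 1 →
    c4.natAbs ≤ 1 → c1 ≠ c2 → c1 ≠ c3 → c1 ≠ c4 → c2 ≠ c3 → c2 ≠ c4 → c3 ≠ c4 → False := by
  omega

lemma lower_bound {σ : Sym2 (Fin 5) → ℤˣ} {q : ℕ} {γ : Fin 5 → Fin 5 → ℤ}
    (h : IsProperSignedEdgeColoring (⊤ : SimpleGraph (Fin 5)) σ q γ) : 4 ≤ q := by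
  by_contra hq
  push_neg at hq
  obtain ⟨ha, hb, hc⟩ := h
  have hdiv : q / 2 ≤ 1 := by omega
  have hmem : ∀ w : Fin 5, (0 : Fin 5) ≠ w → (γ 0 w).natAbs ≤ 1 := by
    intro w hw
    have := (ha (top_adj' hw)).1
    omega
  have m1 := hmem 1 (by decide)
  have m2 := hmem 2 (by decide)
  have m3 := hmem 3 (by decide)
  have m4 := hmem 4 (by decide)
  have n12 := hc (v := 0) (top_adj' (by decide)) (top_adj' (by decide)) (show (1 : Fin 5) ≠ 2 by decide)
  have n13 := hc (v := 0) (top_adj' (by decide)) (top_adj' (by decide)) (show (1 : Fin 5) ≠ 3 by decide)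
  have n14 := hc (v := 0) (top_adj' (by decide)) (top_adj' (by decide)) (show (1 : Fin 5) ≠ 4 by decide)
  have n23 := hc (v := 0) (top_adj' (by decide)) (top_adj' (by decide)) (show (2 : Fin 5) ≠ 3 by decide)
  have n24 := hc (v := 0) (top_adj' (by decide)) (top_adj' (by decide)) (show (2 : Fin 5) ≠ 4 by decide)
  have n34 := hc (v := 0) (top_adj' (by decide)) (top_adj' (by decide)) (show (3 : Fin 5) ≠ 4 by decide)
  exact lower_bound_aux (γ 0 1) (γ 0 2) (γ 0 3) (γ 0 4) m1 m2 m3 m4 n12 n13 n14 n23 n24 n34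

-- the walk-existence statement of the main theorem
def WStat (σ : Sym2 (Fin 5) → ℤˣ) : Prop :=
  ∃ (v₁ v₂ : Fin 5) (w₁ : (⊤ : SimpleGraph (Fin 5)).Walk v₁ v₁)
    (w₂ : (⊤ : SimpleGraph (Fin 5)).Walk v₂ v₂),
    w₁.IsCycle ∧ w₂.IsCycle ∧ w₁.length = 5 ∧ w₂.length = 5 ∧
    (w₁.edges.map σ).prod = 1 ∧ (w₂.edges.map σ).prod = 1 ∧
    (∀ e ∈ (⊤ : SimpleGraph (Fin 5)).edgeSet, e ∈ w₁.edges ∨ e ∈ w₂.edges) ∧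
    (∀ e : Sym2 (Fin 5), ¬(e ∈ w₁.edges ∧ e ∈ w₂.edges))

lemma decomp_wstat {σ : Sym2 (Fin 5) → ℤˣ} (h : Decomp σ) : WStat σ := by
  obtain ⟨a0, a1, a2, a3, a4, b0, b1, b2, b3, b4, hdA, hdB, prodA, prodB, hcov, hdisj⟩ := h
  obtain ⟨d1, d2, d3, d4, d5, d6, d7, d8, d9, d10⟩ := hdA
  obtain ⟨f1, f2, f3, f4, f5, f6, f7, f8, f9, f10⟩ := hdB
  refine ⟨a0, b0,
    .cons (top_adj' d1) (.cons (top_adj' d5) (.cons (top_adj' d8) (.cons (top_adj' d10)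
      (.cons (top_adj' d4.symm) .nil)))),
    .cons (top_adj' f1) (.cons (top_adj' f5) (.cons (top_adj' f8) (.cons (top_adj' f10)
      (.cons (top_adj' f4.symm) .nil)))), ?_, ?_, rfl, rfl, prodA, prodB, ?_, ?_⟩
  · rw [Walk.isCycle_def]
    refine ⟨?_, by simp, ?_⟩
    · rw [Walk.isTrail_def]
      simp only [Walk.edges_cons, Walk.edges_nil, List.nodup_cons, List.mem_cons,
        List.not_mem_nil, or_false, List.nodup_nil, and_true, Sym2.eq_iff, not_or]
      refine ⟨⟨?_, ?_, ?_, ?_⟩, ⟨?_, ?_, ?_⟩, ⟨?_, ?_⟩, ?_⟩ <;> tauto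
    · simp only [Walk.support_cons, Walk.support_nil, List.tail_cons, List.nodup_cons,
        List.mem_cons, List.not_mem_nil, or_false, List.nodup_nil, and_true, not_or]
      tauto
  · rw [Walk.isCycle_def]
    refine ⟨?_, by simp, ?_⟩
    · rw [Walk.isTrail_def]
      simp only [Walk.edges_cons, Walk.edges_nil, List.nodup_cons, List.mem_cons,
        List.not_mem_nil, or_false, List.nodup_nil, and_true, Sym2.eq_iff, not_or]
      refine ⟨⟨?_, ?_, ?_, ?_⟩, ⟨?_, ?_, ?_⟩, ⟨?_, ?_⟩, ?_⟩ <;> tauto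
    · simp only [Walk.support_cons, Walk.support_nil, List.tail_cons, List.nodup_cons,
        List.mem_cons, List.not_mem_nil, or_false, List.nodup_nil, and_true, not_or]
      tauto
  · intro e he
    induction e using Sym2.ind with
    | _ v w =>
      have hvw : v ≠ w := (SimpleGraph.mem_edgeSet (⊤ : SimpleGraph (Fin 5))).mp he
      exact hcov v w hvw
  · exact hdisj

lemma wstat_decomp {σ : Sym2 (Fin 5) → ℤˣ} (h : WStat σ) : Decomp σ := by
  obtain ⟨v1, v2, w1, w2, hc1, hc2, hl1, hl2, hp1, hp2, hcov, hdisj⟩ := h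
  rcases w1 with _ | ⟨h01, _ | ⟨h12, _ | ⟨h23, _ | ⟨h34, _ | ⟨h40, _ | ⟨h5, p⟩⟩⟩⟩⟩⟩
  · simp at hl1
  · simp at hl1
  · simp at hl1
  · simp at hl1
  · simp at hl1
  · rename_i c1 c2 c3 c4
    rcases w2 with _ | ⟨g01, _ | ⟨g12, _ | ⟨g23, _ | ⟨g34, _ | ⟨g40, _ | ⟨g5, p⟩⟩⟩⟩⟩⟩
    · simp at hl2
    · simp at hl2
    · simp at hl2
    · simp at hl2
    · simp at hl2
    · rename_i e1 e2 e3 e4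
      rw [Walk.isCycle_def] at hc1 hc2
      have hs1 := hc1.2.2
      have hs2 := hc2.2.2
      simp only [Walk.support_cons, Walk.support_nil, List.tail_cons, List.nodup_cons,
        List.mem_cons, List.not_mem_nil, or_false, List.nodup_nil, and_true, not_or,
        not_false_eq_true] at hs1 hs2
      refine ⟨v1, c1, c2, c3, c4, v2, e1, e2, e3, e4,
        ⟨fun hh => hs1.1.2.2.2 hh.symm, fun hh => hs1.2.1.2.2 hh.symm,
          fun hh => hs1.2.2.1.2 hh.symm, fun hh => hs1.2.2.2 hh.symm,
          hs1.1.1, hs1.1.2.1, hs1.1.2.2.1, hs1.2.1.1, hs1.2.1.2.1, hs1.2.2.1.1⟩,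
        ⟨fun hh => hs2.1.2.2.2 hh.symm, fun hh => hs2.2.1.2.2 hh.symm,
          fun hh => hs2.2.2.1.2 hh.symm, fun hh => hs2.2.2.2 hh.symm,
          hs2.1.1, hs2.1.2.1, hs2.1.2.2.1, hs2.2.1.1, hs2.2.1.2.1, hs2.2.2.1.1⟩,
        hp1, hp2, ?_, hdisj⟩
      intro v w hvw
      exact hcov s(v,w) ((SimpleGraph.mem_edgeSet (⊤ : SimpleGraph (Fin 5))).mpr (top_adj' hvw))
    · simp only [Walk.length_cons] at hl2
      omega
  · simp only [Walk.length_cons] at hl1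
    omega
end Assembly

theorem chromaticIndex_signed_K5_iff_pre (σ : Sym2 (Fin 5) → ℤˣ) :
    (signedChromaticIndex (⊤ : SimpleGraph (Fin 5)) σ = 4 ↔ WStat σ) ∧
    (¬ WStat σ → signedChromaticIndex (⊤ : SimpleGraph (Fin 5)) σ = 5) := by
  classical
  set S := {q : ℕ | ∃ γ : Fin 5 → Fin 5 → ℤ, IsProperSignedEdgeColoring (⊤ : SimpleGraph (Fin 5)) σ q γ} with hS
  have h5 : 5 ∈ S := ⟨tblK5 σ, key5 σ⟩
  have hne : S.Nonempty := ⟨5, h5⟩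
  have hmem : sInf S ∈ S := Nat.sInf_mem hne
  have hle5 : sInf S ≤ 5 := Nat.sInf_le h5
  have hge4 : 4 ≤ sInf S := by
    obtain ⟨γ, hγ⟩ := hmem
    exact lower_bound hγ
  have hchrom : signedChromaticIndex (⊤ : SimpleGraph (Fin 5)) σ = sInf S := rfl
  constructor
  · constructor
    · intro h4
      rw [hchrom] at h4
      obtain ⟨γ, hγ⟩ : (4 : ℕ) ∈ S := h4 ▸ hmem
      exact decomp_wstat (proper4_decomp σ γ hγ)
    · intro hw
      obtain ⟨γ, hγ⟩ := decomp_proper4 (wstat_decomp hw)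
      have h4 : (4:ℕ) ∈ S := ⟨γ, hγ⟩
      have := Nat.sInf_le h4
      rw [hchrom]
      omega
  · intro hnw
    have h4 : (4:ℕ) ∉ S := by
      rintro ⟨γ, hγ⟩
      exact hnw (decomp_wstat (proper4_decomp σ γ hγ))
    have : sInf S ≠ 4 := fun hh => h4 (hh ▸ hmem)
    rw [hchrom]
    omega


/-- For a signature `σ` on `K₅`, `χ'(K₅, σ) = 4` iff the edge set of
`K₅` can be partitioned into two Hamiltonian cycles both of which are positive in
`(K₅, σ)`; otherwise `χ'(K₅, σ) = 5`. -/
theorem chromaticIndex_signed_K5_iff (σ : Sym2 (Fin 5) → ℤˣ) :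
    (signedChromaticIndex (⊤ : SimpleGraph (Fin 5)) σ = 4 ↔
      ∃ (v₁ v₂ : Fin 5) (w₁ : (⊤ : SimpleGraph (Fin 5)).Walk v₁ v₁)
        (w₂ : (⊤ : SimpleGraph (Fin 5)).Walk v₂ v₂),
        w₁.IsCycle ∧ w₂.IsCycle ∧ w₁.length = 5 ∧ w₂.length = 5 ∧
        (w₁.edges.map σ).prod = 1 ∧ (w₂.edges.map σ).prod = 1 ∧
        (∀ e ∈ (⊤ : SimpleGraph (Fin 5)).edgeSet, e ∈ w₁.edges ∨ e ∈ w₂.edges) ∧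
        (∀ e : Sym2 (Fin 5), ¬(e ∈ w₁.edges ∧ e ∈ w₂.edges))) ∧
    (¬(∃ (v₁ v₂ : Fin 5) (w₁ : (⊤ : SimpleGraph (Fin 5)).Walk v₁ v₁)
        (w₂ : (⊤ : SimpleGraph (Fin 5)).Walk v₂ v₂),
        w₁.IsCycle ∧ w₂.IsCycle ∧ w₁.length = 5 ∧ w₂.length = 5 ∧
        (w₁.edges.map σ).prod = 1 ∧ (w₂.edges.map σ).prod = 1 ∧
        (∀ e ∈ (⊤ : SimpleGraph (Fin 5)).edgeSet, e ∈ w₁.edges ∨ e ∈ w₂.edges) ∧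
        (∀ e : Sym2 (Fin 5), ¬(e ∈ w₁.edges ∧ e ∈ w₂.edges))) →
      signedChromaticIndex (⊤ : SimpleGraph (Fin 5)) σ = 5) :=
  chromaticIndex_signed_K5_iff_pre σ
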